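/- For any integers d ≥ 1, ℓ ≥ 2, Δ ≥ d and any d-degenerate graph G of maximum degree at most Δ, the power graph G^ℓ is 2^{ℓ+2}·d^{⌈ℓ/2⌉}·Δ^{⌊ℓ/2⌋}-degenerate. -/

import Mathlib

/-- `G` is `d`-degenerate. -/
def IsDegenerate {V : Type*} (G : SimpleGraph V) (d : ℕ) : Prop :=
  ∀ s : Set V, s.Nonempty →
    ∃ v ∈ s, (s ∩ G.neighborSet v).Finite ∧ (s ∩ G.neighborSet v).ncard ≤ d

/-- `G` has maximum degree at most `Δ`. -/
def MaxDegreeLE {V : Type*} (G : SimpleGraph V) (Δ : ℕ) : Prop :=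
  ∀ v, (G.neighborSet v).Finite ∧ (G.neighborSet v).ncard ≤ Δ

/-- The power graph `G^ℓ`: two distinct vertices are adjacent iff some path of `G` with at
most `ℓ` edges contains both of them. -/
def powerGraph {V : Type*} (G : SimpleGraph V) (ℓ : ℕ) : SimpleGraph V where
  Adj v w := v ≠ w ∧ ∃ (a b : V) (p : G.Walk a b),
    p.IsPath ∧ p.length ≤ ℓ ∧ v ∈ p.support ∧ w ∈ p.support
  symm := by
    constructor
    rintro v w ⟨hne, a, b, p, hp, hl, hv, hw⟩
    exact ⟨hne.symm, a, b, p, hp, hl, hw, hv⟩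
  loopless := by
    constructor
    rintro v ⟨hne, -⟩
    exact hne rfl

namespace PowerDegenAux

open SimpleGraph Finset
open scoped Classical

variable {V : Type*}

/-- number of strictly descending steps of a walk, w.r.t. a ranking `f`. -/
def dcount {G : SimpleGraph V} (f : V → ℕ) : ∀ {a b : V}, G.Walk a b → ℕ
  | _, _, .nil => 0
  | _, _, @Walk.cons _ _ a c _ _ p => (if f c < f a then 1 else 0) + dcount f p

lemma dcount_append {G : SimpleGraph V} (f : V → ℕ) {a b c : V}
    (p : G.Walk a b) (q : G.Walk b c) :
    dcount f (p.append q) = dcount f p + dcount f q := by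
  induction p with
  | nil => simp [dcount]
  | cons h p ih => simp [dcount, ih]; omega

lemma dcount_reverse {G : SimpleGraph V} {f : V → ℕ} (hf : Function.Injective f) :
    ∀ {a b : V} (p : G.Walk a b), dcount f p.reverse + dcount f p = p.length := by
  intro a b p
  induction p with
  | nil => simp [dcount]
  | @cons a c b h p ih =>
    rw [Walk.reverse_cons, dcount_append]
    have hne : f a ≠ f c := fun e => h.ne (hf e)
    rcases hne.lt_or_gt with h1 | h1 <;>
      simp [dcount, h1, Nat.lt_asymm h1, Walk.length_cons] <;> omega

lemma dcount_concat {G : SimpleGraph V} (f : V → ℕ) {x u w : V}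
    (q : G.Walk x u) (h : G.Adj u w) :
    dcount f (q.concat h) = dcount f q + (if f w < f u then 1 else 0) := by
  rw [Walk.concat_eq_append, dcount_append]; simp [dcount]

lemma exists_concat {G : SimpleGraph V} {x w : V} (p : G.Walk x w) (hp : 0 < p.length) :
    ∃ (u : V) (q : G.Walk x u) (h : G.Adj u w), p = q.concat h := by
  cases hrev : p.reverse with
  | nil =>
    exfalso
    have h0 : p.reverse.length = 0 := by rw [hrev]; rfl
    rw [Walk.length_reverse] at h0
    omega
  | cons h q =>
    refine ⟨_, q.reverse, h.symm, ?_⟩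
    have := congrArg Walk.reverse hrev
    rwa [Walk.reverse_reverse, Walk.reverse_cons, ← Walk.concat_eq_append] at this

lemma exists_rank [Fintype V] (G : SimpleGraph V) (d : ℕ) (hdeg : IsDegenerate G d) :
    ∃ f : V → ℕ, Function.Injective f ∧
      ∀ v, ((Finset.univ.filter fun u => G.Adj v u ∧ f v < f u).card ≤ d) := by
  classical
  suffices h : ∀ (n : ℕ) (s : Finset V), s.card = n →
      ∃ f : V → ℕ, Set.InjOn f ↑s ∧
        ∀ v ∈ s, ((s.filter fun u => G.Adj v u ∧ f v < f u).card ≤ d) by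
    obtain ⟨f, hinj, hf⟩ := h _ Finset.univ rfl
    exact ⟨f, fun x y hxy => hinj (by simp) (by simp) hxy, fun v => hf v (by simp)⟩
  intro n
  induction n with
  | zero =>
    intro s hs
    refine ⟨fun _ => 0, ?_, ?_⟩ <;> simp [Finset.card_eq_zero.mp hs]
  | succ n ih =>
    intro s hs
    have hne : s.Nonempty := by rw [← Finset.card_pos, hs]; omega
    obtain ⟨v, hvs, hfin, hcard⟩ := hdeg ↑s (Finset.coe_nonempty.mpr hne)
    have hvs' : v ∈ s := by exact_mod_cast hvs
    obtain ⟨g, hginj, hg⟩ := ih (s.erase v)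
      (by rw [Finset.card_erase_of_mem hvs', hs]; rfl)
    refine ⟨fun u => if u = v then 0 else g u + 1, ?_, ?_⟩
    · intro x hx y hy hxy
      by_cases hxv : x = v
      · by_cases hyv : y = v
        · rw [hxv, hyv]
        · exfalso; simp only [if_pos hxv, if_neg hyv] at hxy; omega
      · by_cases hyv : y = v
        · exfalso; simp only [if_neg hxv, if_pos hyv] at hxy; omega
        · simp only [if_neg hxv, if_neg hyv] at hxy
          have hx' : x ∈ (↑(s.erase v) : Set V) := by
            simp only [Finset.mem_coe, Finset.mem_erase]
            exact ⟨hxv, by exact_mod_cast hx⟩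
          have hy' : y ∈ (↑(s.erase v) : Set V) := by
            simp only [Finset.mem_coe, Finset.mem_erase]
            exact ⟨hyv, by exact_mod_cast hy⟩
          exact hginj hx' hy' (by omega)
    · intro u hu
      by_cases huv : u = v
      · subst huv
        have hEq : ↑(s.filter fun w => G.Adj u w) = (↑s : Set V) ∩ G.neighborSet u := by
          ext w; simp [SimpleGraph.mem_neighborSet, and_comm]
        have hle : (s.filter fun w => G.Adj u w).card ≤ d := by
          rw [← Set.ncard_coe_finset, hEq]; exact hcard
        refine le_trans (Finset.card_le_card ?_) hle
        intro w hw
        rw [Finset.mem_filter] at hw ⊢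
        exact ⟨hw.1, hw.2.1⟩
      · have hu' : u ∈ s.erase v := Finset.mem_erase.mpr ⟨huv, hu⟩
        refine le_trans (Finset.card_le_card ?_) (hg u hu')
        intro w hw
        rw [Finset.mem_filter] at hw ⊢
        obtain ⟨hws, hadj, hlt⟩ := hw
        simp only at hlt
        have hwv : w ≠ v := by
          intro e
          rw [if_neg huv, if_pos e] at hlt; omega
        rw [if_neg huv, if_neg hwv] at hlt
        exact ⟨Finset.mem_erase.mpr ⟨hwv, hws⟩, hadj, by omega⟩

lemma nbr_card_le [Fintype V] {G : SimpleGraph V} {Δ : ℕ} (hmax : MaxDegreeLE G Δ) (v : V) :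
    (Finset.univ.filter fun u => G.Adj v u).card ≤ Δ := by
  have h := (hmax v).2
  have hEq : ↑(Finset.univ.filter fun u => G.Adj v u) = G.neighborSet v := by
    ext u; simp [SimpleGraph.mem_neighborSet]
  rw [← Set.ncard_coe_finset, hEq]
  exact h

/-- vertices reachable from `x` by a walk of length exactly `k` with at most `j` descents. -/
noncomputable def reachF [Fintype V] (G : SimpleGraph V) (f : V → ℕ) (x : V) (k j : ℕ) :
    Finset V :=
  Finset.univ.filter fun w => ∃ p : G.Walk x w, p.length = k ∧ dcount f p ≤ j

lemma reachF_card [Fintype V] {G : SimpleGraph V} {f : V → ℕ} {d Δ : ℕ}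
    (hd : 1 ≤ d) (hΔ : d ≤ Δ) (hf : Function.Injective f)
    (hup : ∀ v, (Finset.univ.filter fun u => G.Adj v u ∧ f v < f u).card ≤ d)
    (hnb : ∀ v, (Finset.univ.filter fun u => G.Adj v u).card ≤ Δ)
    (x : V) : ∀ k j, (reachF G f x k j).card ≤ 2 ^ k * (d ^ (k - j) * Δ ^ (min j k)) := by
  intro k
  induction k with
  | zero =>
    intro j
    have hsub : reachF G f x 0 j ⊆ {x} := by
      intro w hw
      simp only [reachF, Finset.mem_filter, Finset.mem_univ, true_and] at hw
      obtain ⟨p, hp, -⟩ := hw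
      simp [← Walk.eq_of_length_eq_zero hp]
    refine le_trans (Finset.card_le_card hsub) ?_
    simp
  | succ k ih =>
    intro j
    -- decompose the last step of a walk
    have step : ∀ w ∈ reachF G f x (k + 1) j,
        (∃ u ∈ reachF G f x k j, G.Adj u w ∧ f u < f w) ∨
        (1 ≤ j ∧ ∃ u ∈ reachF G f x k (j - 1), G.Adj u w) := by
      intro w hw
      simp only [reachF, Finset.mem_filter, Finset.mem_univ, true_and] at hw
      obtain ⟨p, hlen, hdc⟩ := hw
      obtain ⟨u, q, hadj, rfl⟩ := exists_concat p (by omega)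
      rw [dcount_concat] at hdc
      have hql : q.length = k := by
        rw [Walk.length_concat] at hlen; omega
      have hne : f u ≠ f w := fun e => hadj.ne (hf e)
      rcases hne.lt_or_gt with hlt | hgt
      · left
        refine ⟨u, ?_, hadj, hlt⟩
        simp only [reachF, Finset.mem_filter, Finset.mem_univ, true_and]
        exact ⟨q, hql, by rw [if_neg (Nat.lt_asymm hlt)] at hdc; omega⟩
      · right
        rw [if_pos hgt] at hdc
        refine ⟨by omega, u, ?_, hadj⟩
        simp only [reachF, Finset.mem_filter, Finset.mem_univ, true_and]
        exact ⟨q, hql, by omega⟩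
    rcases Nat.eq_zero_or_pos j with hj0 | hjpos
    · subst hj0
      have hsub : reachF G f x (k + 1) 0 ⊆
          (reachF G f x k 0).biUnion fun u =>
            Finset.univ.filter fun w => G.Adj u w ∧ f u < f w := by
        intro w hw
        rcases step w hw with ⟨u, hu, hadj, hlt⟩ | ⟨h1, -⟩
        · exact Finset.mem_biUnion.mpr ⟨u, hu, by simp [hadj, hlt]⟩
        · omega
      have c1 : (reachF G f x (k + 1) 0).card ≤ (reachF G f x k 0).card * d := by
        refine le_trans (Finset.card_le_card hsub) (le_trans Finset.card_biUnion_le ?_)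
        simpa using Finset.sum_le_card_nsmul _ _ d fun u _ => hup u
      refine le_trans c1 ?_
      refine le_trans (Nat.mul_le_mul_right d (ih 0)) ?_
      have hEq : 2 ^ k * (d ^ (k - 0) * Δ ^ min 0 k) * d
          = 2 ^ k * (d ^ (k + 1) * Δ ^ min 0 (k + 1)) := by
        simp [Nat.min_zero, Nat.sub_zero, Nat.zero_min, pow_succ]
        ring
      rw [hEq]
      exact Nat.mul_le_mul_right _ (Nat.pow_le_pow_right (by norm_num) (by omega))
    · have hsub : reachF G f x (k + 1) j ⊆
          ((reachF G f x k j).biUnion fun u =>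
            Finset.univ.filter fun w => G.Adj u w ∧ f u < f w) ∪
          ((reachF G f x k (j - 1)).biUnion fun u =>
            Finset.univ.filter fun w => G.Adj u w) := by
        intro w hw
        rcases step w hw with ⟨u, hu, hadj, hlt⟩ | ⟨-, u, hu, hadj⟩
        · exact Finset.mem_union_left _ (Finset.mem_biUnion.mpr ⟨u, hu, by simp [hadj, hlt]⟩)
        · exact Finset.mem_union_right _ (Finset.mem_biUnion.mpr ⟨u, hu, by simp [hadj]⟩)
      have c1 : ((reachF G f x k j).biUnion fun u =>
            Finset.univ.filter fun w => G.Adj u w ∧ f u < f w).card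
          ≤ (reachF G f x k j).card * d := by
        refine le_trans Finset.card_biUnion_le ?_
        simpa using Finset.sum_le_card_nsmul _ _ d fun u _ => hup u
      have c2 : ((reachF G f x k (j - 1)).biUnion fun u =>
            Finset.univ.filter fun w => G.Adj u w).card
          ≤ (reachF G f x k (j - 1)).card * Δ := by
        refine le_trans Finset.card_biUnion_le ?_
        simpa using Finset.sum_le_card_nsmul _ _ Δ fun u _ => hnb u
      have t1 : (reachF G f x k j).card * d
          ≤ 2 ^ k * (d ^ (k + 1 - j) * Δ ^ min j (k + 1)) := by
        refine le_trans (Nat.mul_le_mul_right d (ih j)) ?_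
        rcases le_or_gt j k with hjk | hjk
        · have e1 : k - j + 1 = k + 1 - j := by omega
          have e4 : min j k = min j (k + 1) := by omega
          have hEq : 2 ^ k * (d ^ (k - j) * Δ ^ min j k) * d
              = 2 ^ k * (d ^ (k - j + 1) * Δ ^ min j k) := by
            rw [pow_succ]; ring
          rw [hEq, e1, e4]
        · have e1 : k - j = 0 := by omega
          have e5 : k + 1 - j = 0 := by omega
          have e6 : min j k = k := by omega
          have e7 : min j (k + 1) = k + 1 := by omega
          rw [e1, e5, e6, e7, pow_zero, one_mul, one_mul, pow_succ, ← mul_assoc]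
          exact Nat.mul_le_mul_left _ hΔ
      have t2 : (reachF G f x k (j - 1)).card * Δ
          ≤ 2 ^ k * (d ^ (k + 1 - j) * Δ ^ min j (k + 1)) := by
        refine le_trans (Nat.mul_le_mul_right Δ (ih (j - 1))) ?_
        have e2 : k - (j - 1) = k + 1 - j := by omega
        have e3 : min (j - 1) k + 1 = min j (k + 1) := by omega
        have hEq : 2 ^ k * (d ^ (k - (j - 1)) * Δ ^ min (j - 1) k) * Δ
            = 2 ^ k * (d ^ (k - (j - 1)) * Δ ^ (min (j - 1) k + 1)) := by
          rw [pow_succ]; ring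
        rw [hEq, e2, e3]
      refine le_trans (Finset.card_le_card hsub) (le_trans (Finset.card_union_le _ _) ?_)
      refine le_trans (Nat.add_le_add (le_trans c1 t1) (le_trans c2 t2)) ?_
      have : 2 ^ (k + 1) * (d ^ (k + 1 - j) * Δ ^ min j (k + 1))
          = 2 ^ k * (d ^ (k + 1 - j) * Δ ^ min j (k + 1))
            + 2 ^ k * (d ^ (k + 1 - j) * Δ ^ min j (k + 1)) := by
        rw [pow_succ]; ring
      omega

lemma sum_two_pow : ∀ n : ℕ, ∑ k ∈ Finset.range n, 2 ^ k = 2 ^ n - 1 := by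
  intro n
  induction n with
  | zero => simp
  | succ n ih =>
    rw [Finset.sum_range_succ, ih, pow_succ]
    have := Nat.one_le_two_pow (n := n)
    omega

/-- A cheap walk from `x` to `w`: length at most `ℓ` with at most `⌊ℓ/2⌋` descents. -/
def cheapP (G : SimpleGraph V) (f : V → ℕ) (ℓ : ℕ) (x w : V) : Prop :=
  ∃ p : G.Walk x w, p.length ≤ ℓ ∧ dcount f p ≤ ℓ / 2

lemma cheap_card [Fintype V] {G : SimpleGraph V} {f : V → ℕ} {d Δ : ℕ}
    (hd : 1 ≤ d) (hΔ : d ≤ Δ) (hf : Function.Injective f)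
    (hup : ∀ v, (Finset.univ.filter fun u => G.Adj v u ∧ f v < f u).card ≤ d)
    (hnb : ∀ v, (Finset.univ.filter fun u => G.Adj v u).card ≤ Δ)
    (ℓ : ℕ) (x : V) :
    (Finset.univ.filter fun w => cheapP G f ℓ x w).card
      ≤ (2 ^ (ℓ + 1) - 1) * (d ^ ((ℓ + 1) / 2) * Δ ^ (ℓ / 2)) := by
  have hsub : (Finset.univ.filter fun w => cheapP G f ℓ x w) ⊆
      (Finset.range (ℓ + 1)).biUnion fun k => reachF G f x k (ℓ / 2) := by
    intro w hw
    simp only [Finset.mem_filter, Finset.mem_univ, true_and] at hw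
    obtain ⟨p, h1, h2⟩ := hw
    refine Finset.mem_biUnion.mpr ⟨p.length, Finset.mem_range.mpr (by omega), ?_⟩
    simp only [reachF, Finset.mem_filter, Finset.mem_univ, true_and]
    exact ⟨p, rfl, h2⟩
  refine le_trans (Finset.card_le_card hsub) (le_trans Finset.card_biUnion_le ?_)
  have hbound : ∀ k ∈ Finset.range (ℓ + 1),
      (reachF G f x k (ℓ / 2)).card ≤ 2 ^ k * (d ^ ((ℓ + 1) / 2) * Δ ^ (ℓ / 2)) := by
    intro k hk
    rw [Finset.mem_range] at hk
    refine le_trans (reachF_card hd hΔ hf hup hnb x k (ℓ / 2)) ?_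
    have h1 : d ^ (k - ℓ / 2) ≤ d ^ ((ℓ + 1) / 2) := Nat.pow_le_pow_right hd (by omega)
    have h2 : Δ ^ min (ℓ / 2) k ≤ Δ ^ (ℓ / 2) :=
      Nat.pow_le_pow_right (le_trans hd hΔ) (Nat.min_le_left _ _)
    exact Nat.mul_le_mul_left _ (Nat.mul_le_mul h1 h2)
  refine le_trans (Finset.sum_le_sum hbound) ?_
  rw [← Finset.sum_mul, sum_two_pow]

lemma walk_between {G : SimpleGraph V} {a b x w : V} (p : G.Walk a b)
    (hx : x ∈ p.support) (hw : w ∈ p.support) :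
    ∃ q : G.Walk x w, q.length ≤ p.length := by
  classical
  by_cases hw1 : w ∈ (p.takeUntil x hx).support
  · refine ⟨((p.takeUntil x hx).dropUntil w hw1).reverse, ?_⟩
    rw [Walk.length_reverse]
    exact le_trans (Walk.length_dropUntil_le _ hw1) (Walk.length_takeUntil_le _ hx)
  · have h0 := hw
    rw [← Walk.take_spec p hx, Walk.mem_support_append_iff] at h0
    have hw2 : w ∈ (p.dropUntil x hx).support := by tauto
    exact ⟨(p.dropUntil x hx).takeUntil w hw2,
      le_trans (Walk.length_takeUntil_le _ hw2) (Walk.length_dropUntil_le _ hx)⟩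

lemma cheap_or {G : SimpleGraph V} {f : V → ℕ} (hf : Function.Injective f) {ℓ : ℕ} {x w : V}
    (h : (powerGraph G ℓ).Adj x w) : cheapP G f ℓ x w ∨ cheapP G f ℓ w x := by
  obtain ⟨hne, a, b, p, hp, hl, hxs, hws⟩ := h
  obtain ⟨q, hq⟩ := walk_between p hxs hws
  have hq' : q.length ≤ ℓ := le_trans hq hl
  have hsum := dcount_reverse hf q
  by_cases hc : dcount f q ≤ ℓ / 2
  · exact Or.inl ⟨q, hq', hc⟩
  · refine Or.inr ⟨q.reverse, ?_, ?_⟩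
    · rw [Walk.length_reverse]; exact hq'
    · omega

end PowerDegenAux

theorem stmt11 {V : Type*} [Fintype V] (G : SimpleGraph V) (d ℓ Δ : ℕ)
    (hd : 1 ≤ d) (hℓ : 2 ≤ ℓ) (hΔ : d ≤ Δ)
    (hdeg : IsDegenerate G d) (hmax : MaxDegreeLE G Δ) :
    IsDegenerate (powerGraph G ℓ) (2 ^ (ℓ + 2) * d ^ ((ℓ + 1) / 2) * Δ ^ (ℓ / 2)) := by
  classical
  open PowerDegenAux in
  obtain ⟨f, hf, hup⟩ := PowerDegenAux.exists_rank G d hdeg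
  have hnb := PowerDegenAux.nbr_card_le hmax
  intro s hsne
  have hsf : s.Finite := s.toFinite
  set t := hsf.toFinset with ht
  have htne : t.Nonempty := by
    obtain ⟨x0, hx0⟩ := hsne
    exact ⟨x0, hsf.mem_toFinset.mpr hx0⟩
  set M := d ^ ((ℓ + 1) / 2) * Δ ^ (ℓ / 2) with hM
  set D := 2 ^ (ℓ + 2) * d ^ ((ℓ + 1) / 2) * Δ ^ (ℓ / 2) with hD
  have hDM : D = 2 ^ (ℓ + 2) * M := by rw [hD, hM, mul_assoc]
  have key : ∃ x ∈ t, (t.filter fun w => (powerGraph G ℓ).Adj x w).card ≤ D := by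
    by_contra hcon
    push_neg at hcon
    have hsum := Finset.card_nsmul_le_sum t
      (fun x => (t.filter fun w => (powerGraph G ℓ).Adj x w).card) (D + 1)
      (fun x hx => hcon x hx)
    have hup1 : ∀ x ∈ t, (t.filter fun w => (powerGraph G ℓ).Adj x w).card ≤
        (t.filter fun w => PowerDegenAux.cheapP G f ℓ x w).card +
        (t.filter fun w => PowerDegenAux.cheapP G f ℓ w x).card := by
      intro x hx
      refine le_trans (Finset.card_le_card ?_) (Finset.card_union_le _ _)
      intro w hw
      rw [Finset.mem_filter] at hw
      rcases PowerDegenAux.cheap_or hf hw.2 with h | h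
      · exact Finset.mem_union_left _ (Finset.mem_filter.mpr ⟨hw.1, h⟩)
      · exact Finset.mem_union_right _ (Finset.mem_filter.mpr ⟨hw.1, h⟩)
    have hC : ∀ x y : V, (t.filter fun w => PowerDegenAux.cheapP G f ℓ x w).card
        ≤ (2 ^ (ℓ + 1) - 1) * M := by
      intro x y
      exact le_trans
        (Finset.card_le_card (Finset.filter_subset_filter _ (Finset.subset_univ t)))
        (PowerDegenAux.cheap_card hd hΔ hf hup hnb ℓ x)
    have hswap : ∑ x ∈ t, (t.filter fun w => PowerDegenAux.cheapP G f ℓ w x).card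
        = ∑ w ∈ t, (t.filter fun x => PowerDegenAux.cheapP G f ℓ w x).card := by
      simp only [Finset.card_filter]
      exact Finset.sum_comm
    have hsum2 : ∑ x ∈ t, (t.filter fun w => (powerGraph G ℓ).Adj x w).card
        ≤ t.card * (2 * ((2 ^ (ℓ + 1) - 1) * M)) := by
      refine le_trans (Finset.sum_le_sum hup1) ?_
      rw [Finset.sum_add_distrib, hswap]
      have b1 : ∑ x ∈ t, (t.filter fun w => PowerDegenAux.cheapP G f ℓ x w).card
          ≤ t.card * ((2 ^ (ℓ + 1) - 1) * M) := by
        simpa using Finset.sum_le_card_nsmul t _ _ (fun x _ => hC x x)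
      have b2 : ∑ w ∈ t, (t.filter fun x => PowerDegenAux.cheapP G f ℓ w x).card
          ≤ t.card * ((2 ^ (ℓ + 1) - 1) * M) := by
        simpa using Finset.sum_le_card_nsmul t _ _ (fun w _ => hC w w)
      refine le_trans (Nat.add_le_add b1 b2) (le_of_eq ?_)
      ring
    have h1 : t.card * (D + 1) ≤ t.card * (2 * ((2 ^ (ℓ + 1) - 1) * M)) := by
      refine le_trans ?_ hsum2
      simpa using hsum
    have h2 : 2 * ((2 ^ (ℓ + 1) - 1) * M) ≤ D := by
      rw [hDM]
      have e1 : (2 : ℕ) ^ (ℓ + 2) = 2 * 2 ^ (ℓ + 1) := by rw [pow_succ]; ring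
      have e2 : (1 : ℕ) ≤ 2 ^ (ℓ + 1) := Nat.one_le_two_pow
      calc 2 * ((2 ^ (ℓ + 1) - 1) * M) = (2 * (2 ^ (ℓ + 1) - 1)) * M := by ring
        _ ≤ 2 ^ (ℓ + 2) * M := Nat.mul_le_mul_right M (by omega)
    have hpos : 0 < t.card := Finset.card_pos.mpr htne
    have hfin2 := Nat.le_of_mul_le_mul_left
      (le_trans h1 (Nat.mul_le_mul_left _ h2)) hpos
    omega
  obtain ⟨x, hxt, hxle⟩ := key
  refine ⟨x, hsf.mem_toFinset.mp hxt, Set.toFinite _, ?_⟩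
  have hEq : s ∩ (powerGraph G ℓ).neighborSet x
      = ↑(t.filter fun w => (powerGraph G ℓ).Adj x w) := by
    ext w
    simp only [Set.mem_inter_iff, SimpleGraph.mem_neighborSet, Finset.coe_filter,
      Set.mem_setOf_eq, ht, Set.Finite.mem_toFinset]
  rw [hEq, Set.ncard_coe_finset]
  exact hxle
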